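/- Let G and G′ be finite groups with supercharacter theories C = (𝒳,𝒦) and C′ = (𝒳′,𝒦′). Then G × G′ is (C × C′)-quasi-monomial if and only if G is C-quasi-monomial and G′ is C′-quasi-monomial. -/

import Mathlib

open scoped Classical BigOperators

noncomputable def cInd {G : Type} [Group G] [Fintype G] (H : Subgroup G)
    (f : H → ℂ) : G → ℂ := fun g =>
  (Nat.card H : ℂ)⁻¹ *
    ∑ x : G, if h : x⁻¹ * g * x ∈ H then f ⟨x⁻¹ * g * x, h⟩ else 0

noncomputable def cInner (G : Type) [Group G] [Fintype G] (φ ψ : G → ℂ) : ℂ :=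
  (Nat.card G : ℂ)⁻¹ * ∑ g : G, φ g * starRingEnd ℂ (ψ g)

/-- `χ` is the character of some finite-dimensional complex representation of `G`. -/
def IsChar (G : Type) [Group G] (χ : G → ℂ) : Prop :=
  ∃ V : FDRep ℂ G, FDRep.character V = χ

/-- `χ` is the character of some irreducible complex representation of `G`. -/
def IsIrrChar (G : Type) [Group G] (χ : G → ℂ) : Prop :=
  ∃ V : FDRep ℂ G, CategoryTheory.Simple V ∧ FDRep.character V = χ

/-- `χ` is a constituent of `θ`: their inner product is nonzero. -/
def IsConstituent {G : Type} [Group G] [Fintype G] (χ θ : G → ℂ) : Prop :=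
  cInner G θ χ ≠ 0

def charKer {G : Type} [Group G] (χ : G → ℂ) : Set G := {g | χ g = χ 1}

/-- The supercharacter attached to a set `X` of irreducible characters. -/
noncomputable def superchar {G : Type} [Group G] (X : Set (G → ℂ)) : G → ℂ :=
  fun g => ∑ᶠ ψ ∈ X, ψ 1 * ψ g

def Monomial (G : Type) [Group G] [Fintype G] : Prop :=
  ∀ χ : G → ℂ, IsIrrChar G χ →
    ∃ (H : Subgroup G) (lam : H →* ℂ), cInd H (fun h => lam h) = χ

def QuasiMonomial (G : Type) [Group G] [Fintype G] : Prop :=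
  ∀ χ : G → ℂ, IsIrrChar G χ →
    ∃ (H : Subgroup G) (lam : H →* ℂ) (d : ℕ), 0 < d ∧
      cInd H (fun h => lam h) = fun g => (d : ℂ) * χ g

def AlmostMonomial (G : Type) [Group G] [Fintype G] : Prop :=
  ∀ χ ψ : G → ℂ, IsIrrChar G χ → IsIrrChar G ψ → χ ≠ ψ →
    ∃ (H : Subgroup G) (lam : H →* ℂ),
      IsConstituent χ (cInd H (fun h => lam h)) ∧
      ¬ IsConstituent ψ (cInd H (fun h => lam h))

/-- A supercharacter theory of a finite group `G` (Diaconis–Isaacs). -/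
structure SCTheory (G : Type) [Group G] where
  XX : Set (Set (G → ℂ))
  KK : Set (Set G)
  XX_nonempty : ∀ X ∈ XX, X.Nonempty
  XX_disj : ∀ X ∈ XX, ∀ Y ∈ XX, X ≠ Y → Disjoint X Y
  XX_cover : ⋃₀ XX = {χ | IsIrrChar G χ}
  KK_nonempty : ∀ K ∈ KK, K.Nonempty
  KK_disj : ∀ K ∈ KK, ∀ L ∈ KK, K ≠ L → Disjoint K L
  KK_cover : ⋃₀ KK = Set.univ
  one_mem : ({1} : Set G) ∈ KK
  card_eq : Nat.card XX = Nat.card KK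
  const : ∀ X ∈ XX, ∀ K ∈ KK, ∀ g ∈ K, ∀ g' ∈ K, superchar X g = superchar X g'

def CQuasiMonomial {G : Type} [Group G] [Fintype G] (C : SCTheory G) : Prop :=
  ∀ X ∈ C.XX, ∃ (t : ℕ) (H : Fin t → Subgroup G) (lam : ∀ i, (H i) →* ℂ) (d : ℕ),
    0 < d ∧
    (∑ i, cInd (H i) (fun h => lam i h)) = fun g => (d : ℂ) * superchar X g

def CAlmostMonomial {G : Type} [Group G] [Fintype G] (C : SCTheory G) : Prop :=
  ∀ Xk ∈ C.XX, ∀ Xl ∈ C.XX, Xk ≠ Xl →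
    ∃ (t : ℕ) (H : Fin t → Subgroup G) (lam : ∀ i, (H i) →* ℂ)
      (α : Set (G → ℂ) → ℕ),
      0 < α Xk ∧ α Xl = 0 ∧
      (∑ i, cInd (H i) (fun h => lam i h)) =
        fun g => ∑ᶠ X ∈ C.XX, (α X : ℂ) * superchar X g

/-- `N` is `C`-normal: a union of superclasses. -/
def CNormal {G : Type} [Group G] (C : SCTheory G) (N : Subgroup G) : Prop :=
  ∃ S ⊆ C.KK, (N : Set G) = ⋃₀ S

/-- `Cq` is the supercharacter theory induced by `C` on `G ⧸ N`. -/
def IsQuotientTheory {G : Type} [Group G] (C : SCTheory G)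
    (N : Subgroup G) [N.Normal] (Cq : SCTheory (G ⧸ N)) : Prop :=
  Cq.XX = {Y | ∃ X ∈ C.XX, (∀ χ ∈ X, ∀ n ∈ N, χ n = χ 1) ∧
      Y = {χ' : G ⧸ N → ℂ | (fun g : G => χ' (g : G ⧸ N)) ∈ X}} ∧
  Cq.KK = {K' | ∃ K ∈ C.KK, K' = (fun g : G => (g : G ⧸ N)) '' K}

/-- The part `X × X'` of `Irr(G × G')`, via external products of characters. -/
def prodPart {G G' : Type} (X : Set (G → ℂ)) (X' : Set (G' → ℂ)) :
    Set (G × G' → ℂ) :=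
  {χ | ∃ φ ∈ X, ∃ ψ ∈ X', χ = fun p => φ p.1 * ψ p.2}

/-- `Cp` is the product supercharacter theory `C × C'` on `G × G'`. -/
def IsProdTheory {G G' : Type} [Group G] [Group G'] (C : SCTheory G)
    (C' : SCTheory G') (Cp : SCTheory (G × G')) : Prop :=
  Cp.XX = {S | ∃ X ∈ C.XX, ∃ X' ∈ C'.XX, S = prodPart X X'} ∧
  Cp.KK = {S | ∃ K ∈ C.KK, ∃ K' ∈ C'.KK, S = K ×ˢ K'}
-- ===== auxiliary lemmas =====

/-- Bilinear "inner product" without conjugation. -/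
noncomputable def bform (G : Type) [Group G] [Fintype G] (φ ψ : G → ℂ) : ℂ :=
  (Fintype.card G : ℂ)⁻¹ * ∑ g : G, φ g * ψ g⁻¹

theorem my_orth {G : Type} [Group G] [Fintype G] (V W : FDRep ℂ G)
    [CategoryTheory.Simple V] [CategoryTheory.Simple W] :
    bform G (FDRep.character V) (FDRep.character W) =
      if Nonempty (V ≅ W) then 1 else 0 := by
  letI i1 : Fintype G := ‹Fintype G›
  haveI : Invertible ((Nat.card G : ℂ)) := by
    refine invertibleOfNonzero ?_
    exact_mod_cast Nat.card_pos.ne'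
  have := FDRep.char_orthonormal (k := ℂ) (G := G) V W
  rw [Nat.card_eq_fintype_card] at this
  simpa [bform] using this

theorem bform_self {G : Type} [Group G] [Fintype G] {χ : G → ℂ}
    (h : IsIrrChar G χ) : bform G χ χ = 1 := by
  obtain ⟨V, hV, rfl⟩ := h
  haveI := hV
  rw [my_orth V V, if_pos ⟨CategoryTheory.Iso.refl V⟩]

theorem bform_ne {G : Type} [Group G] [Fintype G] {χ ψ : G → ℂ}
    (hχ : IsIrrChar G χ) (hψ : IsIrrChar G ψ) (hne : χ ≠ ψ) :
    bform G χ ψ = 0 := by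
  obtain ⟨V, hV, rfl⟩ := hχ
  obtain ⟨W, hW, rfl⟩ := hψ
  haveI := hV; haveI := hW
  rw [my_orth V W, if_neg]
  rintro ⟨i⟩
  exact hne (FDRep.char_iso i)
/-- bform is linear in the first slot over finite sums. -/
theorem bform_sum {G : Type} [Group G] [Fintype G] {ι : Type*} (s : Finset ι)
    (f : ι → G → ℂ) (c : ι → ℂ) (ψ : G → ℂ) :
    bform G (fun g => ∑ i ∈ s, c i * f i g) ψ = ∑ i ∈ s, c i * bform G (f i) ψ := by
  unfold bform
  simp only [Finset.sum_mul, Finset.mul_sum]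
  rw [Finset.sum_comm]
  refine Finset.sum_congr rfl fun i _ => Finset.sum_congr rfl fun g _ => by ring

theorem irr_setFinite (G : Type) [Group G] [Fintype G] :
    {χ : G → ℂ | IsIrrChar G χ}.Finite := by
  have hli : LinearIndependent ℂ (fun χ : {χ : G → ℂ | IsIrrChar G χ} => (χ : G → ℂ)) := by
    rw [linearIndependent_iff]
    intro l hl
    ext j
    have h0 : (fun g => ∑ i ∈ l.support, l i * (i : G → ℂ) g) = (0 : G → ℂ) := by
      funext g
      have := congrFun (congrArg (fun v => (v : G → ℂ)) hl) g
      simpa [Finsupp.linearCombination, Finsupp.sum, mul_comm] using this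
    have := bform_sum (G := G) l.support (fun i => (i : G → ℂ)) (fun i => l i) (j : G → ℂ)
    rw [h0] at this
    have hz : bform G (0 : G → ℂ) (j : G → ℂ) = 0 := by simp [bform]
    rw [hz] at this
    by_cases hj : j ∈ l.support
    · rw [Finset.sum_eq_single j] at this
      · rw [bform_self j.2] at this
        simpa using this.symm
      · intro b _ hb
        rw [bform_ne b.2 j.2 (by simpa using Subtype.coe_injective.ne hb), mul_zero]
      · intro h; exact absurd hj h
    · simpa using Finsupp.notMem_support_iff.mp hj
  exact hli.setFinite

theorem irr_one {G : Type} [Group G] [Fintype G] {χ : G → ℂ}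
    (h : IsIrrChar G χ) : ∃ n : ℕ, 0 < n ∧ χ 1 = n := by
  obtain ⟨V, hV, rfl⟩ := h
  haveI := hV
  refine ⟨Module.finrank ℂ V, ?_, by simpa using FDRep.char_one V⟩
  by_contra hn
  push_neg at hn
  have hrank : Module.finrank ℂ V = 0 := Nat.le_zero.mp hn
  have hsub : Subsingleton V := by
    have := Module.finrank_zero_iff (R := ℂ) (M := V).mp hrank
    exact this
  have hzero : FDRep.character V = 0 := by
    funext g
    have : (V.ρ g) = 0 := Subsingleton.elim _ _
    simp [FDRep.character, this]
  have h1 := bform_self (G := G) (χ := FDRep.character V) ⟨V, hV, rfl⟩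
  rw [hzero] at h1
  simp [bform] at h1

theorem prod_char_inj {G G' : Type} [Group G] [Fintype G] [Group G'] [Fintype G']
    {φ φ' : G → ℂ} {ψ ψ' : G' → ℂ}
    (hφ : IsIrrChar G φ) (hφ' : IsIrrChar G φ') (hψ : IsIrrChar G' ψ) (hψ' : IsIrrChar G' ψ')
    (h : (fun p : G × G' => φ p.1 * ψ p.2) = fun p => φ' p.1 * ψ' p.2) :
    φ = φ' ∧ ψ = ψ' := by
  obtain ⟨a, ha, hφ1⟩ := irr_one hφ
  obtain ⟨a', ha', hφ'1⟩ := irr_one hφ'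
  obtain ⟨b, hb, hψ1⟩ := irr_one hψ
  obtain ⟨b', hb', hψ'1⟩ := irr_one hψ'
  have h1 : ∀ g : G, φ g * b = φ' g * b' := by
    intro g
    have := congrFun h (g, 1)
    simpa [hψ1, hψ'1] using this
  -- establish b = b' via bform
  have key : ∀ (f : G → ℂ) (c : ℕ), IsIrrChar G f →
      bform G (fun g => f g * c) (fun g => f g * c) = (c : ℂ) * c := by
    intro f c hf
    have hs : ∑ g : G, (f g * c) * (f g⁻¹ * c) = ((c : ℂ) * c) * ∑ g : G, f g * f g⁻¹ := by
      rw [Finset.mul_sum]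
      exact Finset.sum_congr rfl fun g _ => by ring
    have : bform G (fun g => f g * c) (fun g => f g * c)
        = ((c : ℂ) * c) * bform G f f := by
      unfold bform
      rw [hs]; ring
    rw [this, bform_self hf, mul_one]
  have hbb : (b : ℂ) * b = b' * b' := by
    rw [← key φ b hφ, ← key φ' b' hφ',
      show (fun g => φ g * (b : ℂ)) = fun g => φ' g * (b' : ℂ) from funext h1]
  have hbeq : b = b' := by
    have : (b : ℂ) ^ 2 = (b' : ℂ) ^ 2 := by ring_nf; ring_nf at hbb; exact_mod_cast hbb
    have h2 : (b : ℝ) ^ 2 = (b' : ℝ) ^ 2 := by exact_mod_cast this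
    have := abs_eq_abs.mpr (Or.inl (by nlinarith [sq_abs (b:ℝ), sq_abs (b':ℝ)] : (b:ℝ) = b'))
    exact_mod_cast (by nlinarith : (b : ℝ) = b')
  have hφeq : φ = φ' := by
    funext g
    have := h1 g
    rw [hbeq] at this
    exact mul_right_cancel₀ (by exact_mod_cast hb'.ne' : (b' : ℂ) ≠ 0) this
  have haeq : (a : ℂ) = a' := by
    have := congrFun h (1, 1)
    rw [hφ1, hφ'1, hψ1, hψ'1, hbeq] at this
    exact mul_right_cancel₀ (by exact_mod_cast hb'.ne' : (b' : ℂ) ≠ 0) this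
  have hψeq : ψ = ψ' := by
    funext g'
    have := congrFun h (1, g')
    rw [hφ1, hφ'1, ← haeq] at this
    exact mul_left_cancel₀ (by exact_mod_cast ha.ne' : (a : ℂ) ≠ 0) this
  exact ⟨hφeq, hψeq⟩

theorem superchar_prodPart {G G' : Type} [Group G] [Fintype G] [Group G'] [Fintype G']
    {X : Set (G → ℂ)} {X' : Set (G' → ℂ)}
    (hX : ∀ χ ∈ X, IsIrrChar G χ) (hX' : ∀ χ ∈ X', IsIrrChar G' χ)
    (g : G) (g' : G') :
    superchar (prodPart X X') (g, g') = superchar X g * superchar X' g' := by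
  have hXf : X.Finite := (irr_setFinite G).subset hX
  have hX'f : X'.Finite := (irr_setFinite G').subset hX'
  set e : (G → ℂ) × (G' → ℂ) → (G × G' → ℂ) :=
    fun q => fun p => q.1 p.1 * q.2 p.2 with he
  have himg : prodPart X X' = e '' (X ×ˢ X') := by
    ext χ
    simp only [prodPart, Set.mem_image, Set.mem_setOf_eq, Set.mem_prod, Prod.exists, he]
    constructor
    · rintro ⟨φ, hφ, ψ, hψ, rfl⟩; exact ⟨φ, ψ, ⟨hφ, hψ⟩, rfl⟩
    · rintro ⟨φ, ψ, ⟨hφ, hψ⟩, rfl⟩; exact ⟨φ, hφ, ψ, hψ, rfl⟩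
  have hinj : Set.InjOn e (X ×ˢ X') := by
    rintro ⟨φ, ψ⟩ ⟨hφ, hψ⟩ ⟨φ', ψ'⟩ ⟨hφ', hψ'⟩ hEq
    have := prod_char_inj (hX φ hφ) (hX φ' hφ') (hX' ψ hψ) (hX' ψ' hψ') hEq
    simp only [Prod.mk.injEq]
    exact this
  have hcoe : ((hXf.toFinset ×ˢ hX'f.toFinset : Finset _) : Set ((G → ℂ) × (G' → ℂ)))
      = X ×ˢ X' := by
    simp [Set.Finite.coe_toFinset]
  unfold superchar
  rw [himg, finsum_mem_image hinj, ← hcoe, finsum_mem_coe_finset,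
    finsum_mem_eq_finite_toFinset_sum _ hXf, finsum_mem_eq_finite_toFinset_sum _ hX'f,
    Finset.sum_product, Finset.sum_mul_sum]
  refine Finset.sum_congr rfl fun φ _ => Finset.sum_congr rfl fun ψ _ => ?_
  simp only [he, Prod.fst_one, Prod.snd_one]
  ring

/-- The external product of two linear characters, on `H.prod H'`. -/
noncomputable def prodHom {G G' : Type} [Group G] [Group G'] {H : Subgroup G}
    {H' : Subgroup G'} (lam : H →* ℂ) (mu : H' →* ℂ) : (H.prod H') →* ℂ :=
  (lam.comp (MonoidHom.fst H H') * mu.comp (MonoidHom.snd H H')).comp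
    (Subgroup.prodEquiv H H').toMonoidHom

theorem prodHom_apply {G G' : Type} [Group G] [Group G'] {H : Subgroup G}
    {H' : Subgroup G'} (lam : H →* ℂ) (mu : H' →* ℂ) (x : H.prod H') :
    prodHom lam mu x = lam ⟨x.1.1, x.2.1⟩ * mu ⟨x.1.2, x.2.2⟩ := rfl

theorem cInd_prod {G G' : Type} [Group G] [Fintype G] [Group G'] [Fintype G']
    {H : Subgroup G} {H' : Subgroup G'} (lam : H →* ℂ) (mu : H' →* ℂ) (g : G) (g' : G') :
    cInd (H.prod H') (fun h => prodHom lam mu h) (g, g') =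
      cInd H (fun h => lam h) g * cInd H' (fun h => mu h) g' := by
  unfold cInd
  have hcard : ((Nat.card (H.prod H') : ℂ)) = (Nat.card H : ℂ) * (Nat.card H') := by
    rw [← Nat.cast_mul]
    congr 1
    rw [Nat.card_congr (Subgroup.prodEquiv H H').toEquiv, Nat.card_prod]
  have hsum : (∑ x : G × G', if h : x⁻¹ * (g, g') * x ∈ H.prod H' then
        prodHom lam mu ⟨x⁻¹ * (g, g') * x, h⟩ else 0)
      = (∑ x : G, if h : x⁻¹ * g * x ∈ H then lam ⟨x⁻¹ * g * x, h⟩ else 0) *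
        (∑ y : G', if h : y⁻¹ * g' * y ∈ H' then mu ⟨y⁻¹ * g' * y, h⟩ else 0) := by
    rw [Finset.sum_mul_sum, Fintype.sum_prod_type]
    refine Finset.sum_congr rfl fun x1 _ => Finset.sum_congr rfl fun x2 _ => ?_
    by_cases h1 : x1⁻¹ * g * x1 ∈ H <;> by_cases h2 : x2⁻¹ * g' * x2 ∈ H' <;>
      simp [prodHom_apply, Prod.inv_mk, Prod.mk_mul_mk, Subgroup.mem_prod, h1, h2]
  rw [hsum, hcard]
  ring

theorem superchar_one_nat {G : Type} [Group G] [Fintype G] {X : Set (G → ℂ)}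
    (hX : ∀ χ ∈ X, IsIrrChar G χ) (hne : X.Nonempty) :
    ∃ m : ℕ, 0 < m ∧ superchar X 1 = m := by
  have hXf : X.Finite := (irr_setFinite G).subset hX
  set nn : (G → ℂ) → ℕ := fun χ => if h : IsIrrChar G χ then (irr_one h).choose else 0 with hnn
  have hval : ∀ χ ∈ X, χ 1 = nn χ ∧ 0 < nn χ := by
    intro χ hχ
    have h := hX χ hχ
    simp only [hnn, dif_pos h]
    exact ⟨(irr_one h).choose_spec.2, (irr_one h).choose_spec.1⟩
  refine ⟨∑ χ ∈ hXf.toFinset, nn χ * nn χ, ?_, ?_⟩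
  · refine Finset.sum_pos (fun χ hχ => ?_) (by simpa using hne)
    have := (hval χ (by simpa using hχ)).2
    positivity
  · unfold superchar
    rw [finsum_mem_eq_finite_toFinset_sum _ hXf, Nat.cast_sum]
    refine Finset.sum_congr rfl fun χ hχ => ?_
    rw [(hval χ (by simpa using hχ)).1]
    push_cast
    ring

theorem xx_nonempty {G : Type} [Group G] [Fintype G] (C : SCTheory G) :
    C.XX.Nonempty := by
  by_contra h
  rw [Set.not_nonempty_iff_eq_empty] at h
  have h1 : Nat.card C.XX = 0 := by simp [h]
  have h2 : 0 < Nat.card C.KK := by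
    haveI : Finite C.KK := Subtype.finite
    haveI : Nonempty C.KK := ⟨⟨{1}, C.one_mem⟩⟩
    exact Nat.card_pos
  rw [C.card_eq] at h1
  omega

theorem sum_repeat {G : Type} [Group G] [Fintype G] {t : ℕ} (c : Fin t → ℕ)
    (Hs : Fin t → Subgroup G) (lams : ∀ i, (Hs i) →* ℂ) :
    ∃ (T : ℕ) (Hs' : Fin T → Subgroup G) (lams' : ∀ k, (Hs' k) →* ℂ),
      (∑ k, cInd (Hs' k) (fun h => lams' k h)) =
        ∑ i, (c i : ℂ) • cInd (Hs i) (fun h => lams i h) := by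
  classical
  set F : Fin t → (G → ℂ) := fun i => cInd (Hs i) (fun h => lams i h) with hF
  have hcard : Fintype.card (Σ i : Fin t, Fin (c i)) = ∑ i, c i := by
    simp [Fintype.card_sigma]
  let ee : (Σ i : Fin t, Fin (c i)) ≃ Fin (∑ i, c i) := Fintype.equivFinOfCardEq hcard
  refine ⟨∑ i, c i, fun k => Hs (ee.symm k).1, fun k => lams (ee.symm k).1, ?_⟩
  have step1 : (∑ k : Fin (∑ i, c i), F (ee.symm k).1) = ∑ p : Σ i : Fin t, Fin (c i), F p.1 :=
    Equiv.sum_comp ee.symm (fun p => F p.1)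
  have step2 : (∑ p : Σ i : Fin t, Fin (c i), F p.1) = ∑ i, (c i : ℂ) • F i := by
    rw [← Finset.univ_sigma_univ, Finset.sum_sigma]
    refine Finset.sum_congr rfl fun i _ => ?_
    show ∑ _s : Fin (c i), F i = _
    rw [Finset.sum_const, Finset.card_univ, Fintype.card_fin]
    funext g
    simp
  rw [← step2, ← step1]

/-- Restriction of a linear character along `inl`. -/
noncomputable def inlRes {G G' : Type} [Group G] [Group G'] (H : Subgroup (G × G'))
    (lam : H →* ℂ) : (H.comap (MonoidHom.inl G G')) →* ℂ :=
  lam.comp ((MonoidHom.inl G G').subgroupComap H)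

/-- Restriction of a linear character along `inr`. -/
noncomputable def inrRes {G G' : Type} [Group G] [Group G'] (H : Subgroup (G × G'))
    (lam : H →* ℂ) : (H.comap (MonoidHom.inr G G')) →* ℂ :=
  lam.comp ((MonoidHom.inr G G').subgroupComap H)

theorem subgroup_card_pos {G : Type} [Group G] [Fintype G] (H : Subgroup G) :
    0 < Nat.card H := Nat.card_pos

theorem cInd_restrict_fst {G G' : Type} [Group G] [Fintype G] [Group G'] [Fintype G']
    (H : Subgroup (G × G')) (lam : H →* ℂ) (g : G) :
    (Nat.card H : ℂ) * cInd H (fun h => lam h) (g, 1) =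
      (Fintype.card G' : ℂ) * (Nat.card (H.comap (MonoidHom.inl G G')) : ℂ) *
        cInd (H.comap (MonoidHom.inl G G')) (fun h => inlRes H lam h) g := by
  set H0 := H.comap (MonoidHom.inl G G') with hH0def
  have hH : (Nat.card H : ℂ) ≠ 0 := by exact_mod_cast (subgroup_card_pos H).ne'
  have hH0 : (Nat.card H0 : ℂ) ≠ 0 := by exact_mod_cast (subgroup_card_pos H0).ne'
  unfold cInd
  have key : (∑ x : G × G', if h : x⁻¹ * (g, 1) * x ∈ H then lam ⟨x⁻¹ * (g, 1) * x, h⟩ else 0)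
      = (Fintype.card G' : ℂ) *
        ∑ x1 : G, (if h : x1⁻¹ * g * x1 ∈ H0 then inlRes H lam ⟨x1⁻¹ * g * x1, h⟩ else 0) := by
    rw [Fintype.sum_prod_type, Finset.mul_sum]
    refine Finset.sum_congr rfl fun x1 _ => ?_
    have hx : ∀ x2 : G',
        (if h : (x1, x2)⁻¹ * (g, 1) * (x1, x2) ∈ H then lam ⟨(x1, x2)⁻¹ * (g, 1) * (x1, x2), h⟩ else 0)
        = (if h : x1⁻¹ * g * x1 ∈ H0 then inlRes H lam ⟨x1⁻¹ * g * x1, h⟩ else 0) := by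
      intro x2
      have he : (x1, x2)⁻¹ * (g, 1) * (x1, x2) = ((x1⁻¹ * g * x1 : G), (1 : G')) := by
        have h0 : (x1, x2)⁻¹ * (g, 1) * (x1, x2) = (x1⁻¹ * g * x1, x2⁻¹ * 1 * x2) := rfl
        rw [h0, Prod.mk.injEq]
        exact ⟨rfl, by group⟩
      rw [he]
      have hc : ((x1⁻¹ * g * x1 : G), (1 : G')) ∈ H ↔ x1⁻¹ * g * x1 ∈ H0 := Iff.rfl
      by_cases h : x1⁻¹ * g * x1 ∈ H0
      · rw [dif_pos (hc.mpr h), dif_pos h]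
        rfl
      · rw [dif_neg (fun hh => h (hc.mp hh)), dif_neg h]
    calc (∑ x2 : G', if h : (x1, x2)⁻¹ * (g, 1) * (x1, x2) ∈ H then
            lam ⟨(x1, x2)⁻¹ * (g, 1) * (x1, x2), h⟩ else 0)
        = ∑ _x2 : G', (if h : x1⁻¹ * g * x1 ∈ H0 then inlRes H lam ⟨x1⁻¹ * g * x1, h⟩ else 0) :=
          Finset.sum_congr rfl fun x2 _ => hx x2
      _ = (Fintype.card G' : ℂ) *
            (if h : x1⁻¹ * g * x1 ∈ H0 then inlRes H lam ⟨x1⁻¹ * g * x1, h⟩ else 0) := by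
          rw [Finset.sum_const, Finset.card_univ, nsmul_eq_mul]
  have halg : ∀ A B S : ℂ, B ≠ 0 → A * B * (B⁻¹ * S) = A * S := by
    intro A B S hB; field_simp
  rw [key, ← mul_assoc, mul_inv_cancel₀ hH, one_mul, halg _ _ _ hH0]

theorem cInd_restrict_snd {G G' : Type} [Group G] [Fintype G] [Group G'] [Fintype G']
    (H : Subgroup (G × G')) (lam : H →* ℂ) (g' : G') :
    (Nat.card H : ℂ) * cInd H (fun h => lam h) (1, g') =
      (Fintype.card G : ℂ) * (Nat.card (H.comap (MonoidHom.inr G G')) : ℂ) *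
        cInd (H.comap (MonoidHom.inr G G')) (fun h => inrRes H lam h) g' := by
  set H0 := H.comap (MonoidHom.inr G G') with hH0def
  have hH : (Nat.card H : ℂ) ≠ 0 := by exact_mod_cast (subgroup_card_pos H).ne'
  have hH0 : (Nat.card H0 : ℂ) ≠ 0 := by exact_mod_cast (subgroup_card_pos H0).ne'
  unfold cInd
  have key : (∑ x : G × G', if h : x⁻¹ * (1, g') * x ∈ H then lam ⟨x⁻¹ * (1, g') * x, h⟩ else 0)
      = (Fintype.card G : ℂ) *
        ∑ x2 : G', (if h : x2⁻¹ * g' * x2 ∈ H0 then inrRes H lam ⟨x2⁻¹ * g' * x2, h⟩ else 0) := by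
    rw [Fintype.sum_prod_type_right, Finset.mul_sum]
    refine Finset.sum_congr rfl fun x2 _ => ?_
    have hx : ∀ x1 : G,
        (if h : (x1, x2)⁻¹ * (1, g') * (x1, x2) ∈ H then lam ⟨(x1, x2)⁻¹ * (1, g') * (x1, x2), h⟩ else 0)
        = (if h : x2⁻¹ * g' * x2 ∈ H0 then inrRes H lam ⟨x2⁻¹ * g' * x2, h⟩ else 0) := by
      intro x1
      have he : (x1, x2)⁻¹ * (1, g') * (x1, x2) = ((1 : G), (x2⁻¹ * g' * x2 : G')) := by
        have h0 : (x1, x2)⁻¹ * (1, g') * (x1, x2) = (x1⁻¹ * 1 * x1, x2⁻¹ * g' * x2) := rfl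
        rw [h0, Prod.mk.injEq]
        exact ⟨by group, rfl⟩
      rw [he]
      have hc : ((1 : G), (x2⁻¹ * g' * x2 : G')) ∈ H ↔ x2⁻¹ * g' * x2 ∈ H0 := Iff.rfl
      by_cases h : x2⁻¹ * g' * x2 ∈ H0
      · rw [dif_pos (hc.mpr h), dif_pos h]
        rfl
      · rw [dif_neg (fun hh => h (hc.mp hh)), dif_neg h]
    calc (∑ x1 : G, if h : (x1, x2)⁻¹ * (1, g') * (x1, x2) ∈ H then
            lam ⟨(x1, x2)⁻¹ * (1, g') * (x1, x2), h⟩ else 0)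
        = ∑ _x1 : G, (if h : x2⁻¹ * g' * x2 ∈ H0 then inrRes H lam ⟨x2⁻¹ * g' * x2, h⟩ else 0) :=
          Finset.sum_congr rfl fun x1 _ => hx x1
      _ = (Fintype.card G : ℂ) *
            (if h : x2⁻¹ * g' * x2 ∈ H0 then inrRes H lam ⟨x2⁻¹ * g' * x2, h⟩ else 0) := by
          rw [Finset.sum_const, Finset.card_univ, nsmul_eq_mul]
  have halg : ∀ A B S : ℂ, B ≠ 0 → A * B * (B⁻¹ * S) = A * S := by
    intro A B S hB; field_simp
  rw [key, ← mul_assoc, mul_inv_cancel₀ hH, one_mul, halg _ _ _ hH0]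

/-- Theorem 2.8: `G × G'` is `C × C'`-quasi-monomial iff `G` is `C`-quasi-monomial
and `G'` is `C'`-quasi-monomial. -/
theorem cQuasiMonomial_prod (G G' : Type) [Group G] [Fintype G]
    [Group G'] [Fintype G'] (C : SCTheory G) (C' : SCTheory G')
    (Cp : SCTheory (G × G')) (hp : IsProdTheory C C' Cp) :
    CQuasiMonomial Cp ↔ (CQuasiMonomial C ∧ CQuasiMonomial C') := by
  have hIrrG : ∀ X ∈ C.XX, ∀ χ ∈ X, IsIrrChar G χ := by
    intro X hXmem χ hχ
    have hm : χ ∈ ⋃₀ C.XX := ⟨X, hXmem, hχ⟩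
    rw [C.XX_cover] at hm
    exact hm
  have hIrrG' : ∀ X ∈ C'.XX, ∀ χ ∈ X, IsIrrChar G' χ := by
    intro X hXmem χ hχ
    have hm : χ ∈ ⋃₀ C'.XX := ⟨X, hXmem, hχ⟩
    rw [C'.XX_cover] at hm
    exact hm
  constructor
  · intro hqm
    constructor
    · -- G is C-quasi-monomial
      intro X hX
      obtain ⟨X', hX'⟩ := xx_nonempty C'
      have hS : prodPart X X' ∈ Cp.XX := by
        rw [hp.1]; exact ⟨X, hX, X', hX', rfl⟩
      obtain ⟨t, HH, lamH, d, hd, heq⟩ := hqm _ hS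
      obtain ⟨m, hm, hm1⟩ := superchar_one_nat (hIrrG' X' hX') (C'.XX_nonempty X' hX')
      set H0 : Fin t → Subgroup G := fun i => (HH i).comap (MonoidHom.inl G G') with hH0
      set mus : ∀ i, (H0 i) →* ℂ := fun i => inlRes (HH i) (lamH i) with hmus
      set N : ℕ := ∏ j, Nat.card (HH j) with hN
      set c : Fin t → ℕ := fun i =>
        Fintype.card G' * Nat.card (H0 i) * ∏ j ∈ Finset.univ.erase i, Nat.card (HH j) with hc
      have hkey : ∀ g : G,
          (∑ i, (c i : ℂ) * cInd (H0 i) (fun h => mus i h) g)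
            = (N : ℂ) * ∑ i, cInd (HH i) (fun h => lamH i h) (g, 1) := by
        intro g
        rw [Finset.mul_sum]
        refine Finset.sum_congr rfl fun i _ => ?_
        have hrest : (Nat.card (HH i) : ℂ) * cInd (HH i) (fun h => lamH i h) (g, 1) =
            (Fintype.card G' : ℂ) * (Nat.card (H0 i) : ℂ) *
              cInd (H0 i) (fun h => mus i h) g := cInd_restrict_fst (HH i) (lamH i) g
        have hNi : (N : ℂ) = (∏ j ∈ Finset.univ.erase i, (Nat.card (HH j) : ℂ)) *
            (Nat.card (HH i) : ℂ) := by
          rw [hN]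
          push_cast
          rw [Finset.prod_erase_mul _ _ (Finset.mem_univ i)]
        rw [hNi]
        have hci : (c i : ℂ) = (Fintype.card G' : ℂ) * (Nat.card (H0 i) : ℂ) *
            ∏ j ∈ Finset.univ.erase i, (Nat.card (HH j) : ℂ) := by
          rw [hc]; push_cast; ring
        rw [hci]
        linear_combination (-(∏ j ∈ Finset.univ.erase i, (Nat.card (HH j) : ℂ))) * hrest
      obtain ⟨T, Hs', lams', hsum⟩ := sum_repeat c H0 mus
      refine ⟨T, Hs', lams', N * d * m, ?_, ?_⟩
      · have hNpos : 0 < N := Finset.prod_pos fun j _ => subgroup_card_pos (HH j)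
        positivity
      · funext g
        have h1 := congrFun hsum g
        rw [Finset.sum_apply, Finset.sum_apply] at h1
        rw [Finset.sum_apply, h1]
        have h2 : ∀ i : Fin t, ((c i : ℂ) • cInd (H0 i) fun h => mus i h) g
            = (c i : ℂ) * cInd (H0 i) (fun h => mus i h) g := fun i => rfl
        rw [Finset.sum_congr rfl fun i _ => h2 i, hkey g]
        have h3 := congrFun heq (g, 1)
        rw [Finset.sum_apply] at h3
        rw [h3, superchar_prodPart (hIrrG X hX) (hIrrG' X' hX') g 1, hm1]
        push_cast
        ring
    · -- G' is C'-quasi-monomial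
      intro X' hX'
      obtain ⟨X, hX⟩ := xx_nonempty C
      have hS : prodPart X X' ∈ Cp.XX := by
        rw [hp.1]; exact ⟨X, hX, X', hX', rfl⟩
      obtain ⟨t, HH, lamH, d, hd, heq⟩ := hqm _ hS
      obtain ⟨m, hm, hm1⟩ := superchar_one_nat (hIrrG X hX) (C.XX_nonempty X hX)
      set H0 : Fin t → Subgroup G' := fun i => (HH i).comap (MonoidHom.inr G G') with hH0
      set mus : ∀ i, (H0 i) →* ℂ := fun i => inrRes (HH i) (lamH i) with hmus
      set N : ℕ := ∏ j, Nat.card (HH j) with hN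
      set c : Fin t → ℕ := fun i =>
        Fintype.card G * Nat.card (H0 i) * ∏ j ∈ Finset.univ.erase i, Nat.card (HH j) with hc
      have hkey : ∀ g' : G',
          (∑ i, (c i : ℂ) * cInd (H0 i) (fun h => mus i h) g')
            = (N : ℂ) * ∑ i, cInd (HH i) (fun h => lamH i h) (1, g') := by
        intro g'
        rw [Finset.mul_sum]
        refine Finset.sum_congr rfl fun i _ => ?_
        have hrest : (Nat.card (HH i) : ℂ) * cInd (HH i) (fun h => lamH i h) (1, g') =
            (Fintype.card G : ℂ) * (Nat.card (H0 i) : ℂ) *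
              cInd (H0 i) (fun h => mus i h) g' := cInd_restrict_snd (HH i) (lamH i) g'
        have hNi : (N : ℂ) = (∏ j ∈ Finset.univ.erase i, (Nat.card (HH j) : ℂ)) *
            (Nat.card (HH i) : ℂ) := by
          rw [hN]
          push_cast
          rw [Finset.prod_erase_mul _ _ (Finset.mem_univ i)]
        rw [hNi]
        have hci : (c i : ℂ) = (Fintype.card G : ℂ) * (Nat.card (H0 i) : ℂ) *
            ∏ j ∈ Finset.univ.erase i, (Nat.card (HH j) : ℂ) := by
          rw [hc]; push_cast; ring
        rw [hci]
        linear_combination (-(∏ j ∈ Finset.univ.erase i, (Nat.card (HH j) : ℂ))) * hrest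
      obtain ⟨T, Hs', lams', hsum⟩ := sum_repeat c H0 mus
      refine ⟨T, Hs', lams', N * d * m, ?_, ?_⟩
      · have hNpos : 0 < N := Finset.prod_pos fun j _ => subgroup_card_pos (HH j)
        positivity
      · funext g'
        have h1 := congrFun hsum g'
        rw [Finset.sum_apply, Finset.sum_apply] at h1
        rw [Finset.sum_apply, h1]
        have h2 : ∀ i : Fin t, ((c i : ℂ) • cInd (H0 i) fun h => mus i h) g'
            = (c i : ℂ) * cInd (H0 i) (fun h => mus i h) g' := fun i => rfl
        rw [Finset.sum_congr rfl fun i _ => h2 i, hkey g']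
        have h3 := congrFun heq (1, g')
        rw [Finset.sum_apply] at h3
        rw [h3, superchar_prodPart (hIrrG X hX) (hIrrG' X' hX') 1 g', hm1]
        push_cast
        ring
  · -- converse
    rintro ⟨h1, h2⟩ S hS
    rw [hp.1] at hS
    obtain ⟨X, hX, X', hX', rfl⟩ := hS
    obtain ⟨t, HH, lams, d, hd, heq⟩ := h1 X hX
    obtain ⟨t', HH', lams', d', hd', heq'⟩ := h2 X' hX'
    have hcard : Fintype.card (Fin t × Fin t') = t * t' := by simp
    let ee : (Fin t × Fin t') ≃ Fin (t * t') := Fintype.equivFinOfCardEq hcard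
    refine ⟨t * t', fun k => (HH (ee.symm k).1).prod (HH' (ee.symm k).2),
      fun k => prodHom (lams (ee.symm k).1) (lams' (ee.symm k).2), d * d',
      Nat.mul_pos hd hd', ?_⟩
    funext p
    obtain ⟨g, g'⟩ := p
    rw [Finset.sum_apply]
    have step1 : (∑ k : Fin (t * t'),
        cInd ((HH (ee.symm k).1).prod (HH' (ee.symm k).2))
          (fun h => prodHom (lams (ee.symm k).1) (lams' (ee.symm k).2) h) (g, g'))
        = ∑ q : Fin t × Fin t',
            cInd ((HH q.1).prod (HH' q.2)) (fun h => prodHom (lams q.1) (lams' q.2) h) (g, g') :=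
      Equiv.sum_comp ee.symm
        (fun q => cInd ((HH q.1).prod (HH' q.2)) (fun h => prodHom (lams q.1) (lams' q.2) h) (g, g'))
    rw [step1]
    have step2 : (∑ q : Fin t × Fin t',
        cInd ((HH q.1).prod (HH' q.2)) (fun h => prodHom (lams q.1) (lams' q.2) h) (g, g'))
        = (∑ i, cInd (HH i) (fun h => lams i h) g) * (∑ j, cInd (HH' j) (fun h => lams' j h) g') := by
      rw [Finset.sum_mul_sum, Fintype.sum_prod_type]
      exact Finset.sum_congr rfl fun i _ => Finset.sum_congr rfl fun j _ =>
        cInd_prod (lams i) (lams' j) g g'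
    rw [step2]
    have e1 := congrFun heq g
    have e2 := congrFun heq' g'
    rw [Finset.sum_apply] at e1 e2
    rw [e1, e2, superchar_prodPart (hIrrG X hX) (hIrrG' X' hX') g g']
    push_cast
    ring
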